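/- Tangent cones of Lipschitz normally embedded sets are Lipschitz normally embedded: if X ⊆ ℝ^m contains x₀, X has a unique tangent cone at x₀, and X is Lipschitz normally embedded with constant λ, then T_{x₀}X is Lipschitz normally embedded with constant at most 1 + λ. -/

import Mathlib

open Set Filter Metric
open scoped NNReal ENNReal

/-- Length of a path `γ : [0,1] → E` measured via the (extended) variation. -/
noncomputable def pathLength {E : Type*} [NormedAddCommGroup E] (γ : ℝ → E) : ENNReal :=
  eVariationOn γ (Set.Icc 0 1)

/-- `γ` is a path in `X` from `x` to `y`, parametrized on `[0,1]`. -/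
def IsPathIn {E : Type*} [NormedAddCommGroup E] (X : Set E) (x y : E) (γ : ℝ → E) : Prop :=
  ContinuousOn γ (Set.Icc 0 1) ∧ Set.MapsTo γ (Set.Icc 0 1) X ∧ γ 0 = x ∧ γ 1 = y

/-- The inner (length) distance on `X`: the infimum of the lengths of paths in `X`
joining `x` to `y`. -/
noncomputable def innerDist {E : Type*} [NormedAddCommGroup E] (X : Set E) (x y : E) : ENNReal :=
  ⨅ γ ∈ {γ : ℝ → E | IsPathIn X x y γ}, pathLength γ

/-- The set of directions of `X` at `p` with respect to the sequence `t`. -/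
def dirSeqAt {E : Type*} [NormedAddCommGroup E] [NormedSpace ℝ E]
    (X : Set E) (p : E) (t : ℕ → ℝ) : Set E :=
  {v | ∃ x : ℕ → E, ∃ j₀ : ℕ, (∀ j, x j ∈ X \ {p}) ∧ (∀ j ≥ j₀, ‖x j - p‖ = t j) ∧
    Filter.Tendsto (fun j => (t j)⁻¹ • (x j - p)) Filter.atTop (nhds v)}

/-- `ρ_m⁻¹(X \ {0})`, viewed inside the ambient space `E × ℝ` (the blow-up
`S^{m-1} × [0,∞)` sits inside `E × ℝ` as `{(x, r) : ‖x‖ = 1, r ≥ 0}`,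
and `ρ_m (x, r) = r • x`). -/
def blowupPre {E : Type*} [NormedAddCommGroup E] [NormedSpace ℝ E] (X : Set E) :
    Set (E × ℝ) :=
  {q | ‖q.1‖ = 1 ∧ 0 < q.2 ∧ q.2 • q.1 ∈ X \ {0}}

/-- The cone (with vertex `0`) over a set of directions `D`. -/
def coneOver {E : Type*} [NormedAddCommGroup E] [NormedSpace ℝ E] (D : Set E) : Set E :=
  {p | ∃ t : ℝ, 0 ≤ t ∧ ∃ v ∈ D, p = t • v}

set_option linter.unusedSectionVars false
set_option linter.unusedVariables false

lemma sum_le_two_eta_add {E : Type*} [PseudoEMetricSpace E] (f : ℝ → E) {c τ : ℝ}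
    (η W : ENNReal)
    (hfc : ∀ u ∈ Set.Icc c τ, edist (f u) (f c) ≤ η)
    (hW : ∀ σ, c < σ → σ ≤ τ → eVariationOn f (Set.Icc σ τ) ≤ W) :
    ∀ (n : ℕ) (u : ℕ → ℝ), Monotone u → (∀ i, u i ∈ Set.Icc c τ) →
      ∑ i ∈ Finset.range n, edist (f (u (i+1))) (f (u i)) ≤ 2 * η + W := by
  intro n
  induction n with
  | zero => intro u _ _; simp
  | succ n ih =>
    intro u hu hmem
    rw [Finset.sum_range_succ']
    by_cases h1 : c < u 1
    · have tail : ∑ i ∈ Finset.range n, edist (f (u (i+1+1))) (f (u (i+1))) ≤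
          eVariationOn f (Set.Icc (u 1) τ) := by
        exact eVariationOn.sum_le (f := f) (n := n) (u := fun i => u (i+1))
          (fun i j hij => hu (by omega))
          (fun i => ⟨hu (by omega : 1 ≤ i+1), (hmem (i+1)).2⟩)
      have head : edist (f (u 1)) (f (u 0)) ≤ 2 * η := by
        calc edist (f (u 1)) (f (u 0)) ≤ edist (f (u 1)) (f c) + edist (f c) (f (u 0)) :=
              edist_triangle _ _ _
          _ ≤ η + η := by
              gcongr
              · exact hfc _ (hmem 1)
              · rw [edist_comm]; exact hfc _ (hmem 0)
          _ = 2 * η := (two_mul η).symm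
      calc (∑ i ∈ Finset.range n, edist (f (u (i+1+1))) (f (u (i+1)))) + edist (f (u 1)) (f (u 0))
          ≤ eVariationOn f (Set.Icc (u 1) τ) + 2 * η := add_le_add tail head
        _ ≤ W + 2 * η := by gcongr; exact hW _ h1 (hmem 1).2
        _ = 2 * η + W := add_comm _ _
    · have hu1 : u 1 = c := le_antisymm (not_lt.mp h1) (hmem 1).1
      have hu0 : u 0 = c := le_antisymm (hu1 ▸ hu (by omega : (0:ℕ) ≤ 1)) (hmem 0).1
      have head : edist (f (u 1)) (f (u 0)) = 0 := by rw [hu1, hu0, edist_self]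
      rw [head, add_zero]
      exact ih (fun i => u (i+1)) (fun i j hij => hu (by omega)) (fun i => hmem (i+1))

lemma exists_small_var_right {E : Type*} [PseudoEMetricSpace E] {f : ℝ → E} {c : ℝ}
    (hc : c ∈ Set.Ico (0:ℝ) 1) (hf : ContinuousOn f (Set.Icc 0 1))
    (hfin : eVariationOn f (Set.Icc 0 1) ≠ ⊤) {ε : ℝ} (hε : 0 < ε) :
    ∃ τ ∈ Set.Ioc c 1, eVariationOn f (Set.Icc c τ) ≤ ENNReal.ofReal ε := by
  by_contra hcon
  push_neg at hcon
  -- continuity at c within Icc 0 1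
  have hc01 : c ∈ Set.Icc (0:ℝ) 1 := ⟨hc.1, hc.2.le⟩
  have hcw : ContinuousWithinAt f (Set.Icc 0 1) c := hf c hc01
  have hcw' : ∀ᶠ u in nhdsWithin c (Set.Icc 0 1), edist (f u) (f c) < ENNReal.ofReal (ε/8) :=
    EMetric.tendsto_nhds.mp hcw _ (by positivity)
  rw [Filter.Eventually, Metric.mem_nhdsWithin_iff] at hcw'
  obtain ⟨δ, hδ, hδball⟩ := hcw'
  set τ : ℝ := min (c + δ/2) 1 with hτ
  have hcτ : c < τ := lt_min (by linarith) hc.2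
  have hτ1 : τ ≤ 1 := min_le_right _ _
  have hfc : ∀ u ∈ Set.Icc c τ, edist (f u) (f c) ≤ ENNReal.ofReal (ε/8) := by
    intro u hu
    have hu01 : u ∈ Set.Icc (0:ℝ) 1 := ⟨hc.1.trans hu.1, hu.2.trans hτ1⟩
    have : dist u c < δ := by
      rw [Real.dist_eq, abs_of_nonneg (by linarith [hu.1])]
      have := hu.2.trans (min_le_left _ _)
      linarith
    exact (hδball ⟨Metric.mem_ball.mpr this, hu01⟩).le
  -- A := variation on [c,τ], finite and > ofReal ε
  set A := eVariationOn f (Set.Icc c τ) with hA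
  have hAfin : A ≠ ⊤ := by
    refine ne_top_of_le_ne_top hfin (eVariationOn.mono f ?_)
    intro z hz; exact ⟨hc.1.trans hz.1, hz.2.trans hτ1⟩
  have hεA : ENNReal.ofReal ε < A := hcon τ ⟨hcτ, hτ1⟩
  have hW : ∀ σ, c < σ → σ ≤ τ → eVariationOn f (Set.Icc σ τ) ≤ A - ENNReal.ofReal ε := by
    intro σ hcσ hστ
    have hadd : eVariationOn f (Set.Icc c σ) + eVariationOn f (Set.Icc σ τ) = A := by
      have := eVariationOn.Icc_add_Icc f (s := (Set.univ : Set ℝ)) hcσ.le hστ (Set.mem_univ σ)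
      simpa using this
    have hεσ : ENNReal.ofReal ε ≤ eVariationOn f (Set.Icc c σ) :=
      (hcon σ ⟨hcσ, hστ.trans hτ1⟩).le
    refine ENNReal.le_sub_of_add_le_left (by simp) ?_
    calc ENNReal.ofReal ε + eVariationOn f (Set.Icc σ τ)
        ≤ eVariationOn f (Set.Icc c σ) + eVariationOn f (Set.Icc σ τ) := by gcongr
      _ = A := hadd
  have key : A ≤ 2 * ENNReal.ofReal (ε/8) + (A - ENNReal.ofReal ε) := by
    rw [hA, eVariationOn]
    refine iSup_le ?_
    rintro ⟨n, ⟨u, hu, hmem⟩⟩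
    exact sum_le_two_eta_add f _ _ hfc hW n u hu hmem
  -- contradiction via toReal
  have h2 : (2:ENNReal) * ENNReal.ofReal (ε/8) = ENNReal.ofReal (ε/4) := by
    rw [← ENNReal.ofReal_ofNat, ← ENNReal.ofReal_mul (by norm_num)]
    rw [ENNReal.ofReal_eq_ofReal_iff (by positivity) (by positivity)]
    ring
  rw [h2] at key
  have hεle : ε ≤ A.toReal := by
    rw [← ENNReal.ofReal_le_iff_le_toReal hAfin]
    exact hεA.le
  have := ENNReal.toReal_mono (by
      refine ENNReal.add_ne_top.mpr ⟨ENNReal.ofReal_ne_top, ?_⟩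
      exact ne_top_of_le_ne_top hAfin (tsub_le_self)) key
  rw [ENNReal.toReal_add ENNReal.ofReal_ne_top
      (ne_top_of_le_ne_top hAfin (tsub_le_self)),
    ENNReal.toReal_ofReal (by positivity),
    ENNReal.toReal_sub_of_le hεA.le hAfin,
    ENNReal.toReal_ofReal hε.le] at this
  linarith

lemma exists_small_var_left {E : Type*} [PseudoEMetricSpace E] {f : ℝ → E} {c : ℝ}
    (hc : c ∈ Set.Ioc (0:ℝ) 1) (hf : ContinuousOn f (Set.Icc 0 1))
    (hfin : eVariationOn f (Set.Icc 0 1) ≠ ⊤) {ε : ℝ} (hε : 0 < ε) :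
    ∃ τ ∈ Set.Ico 0 c, eVariationOn f (Set.Icc τ c) ≤ ENNReal.ofReal ε := by
  set r : ℝ → ℝ := fun t => 1 - t with hr
  have hrim : ∀ a b : ℝ, r '' Set.Icc a b = Set.Icc (1-b) (1-a) := by
    intro a b; rw [hr]; exact Set.image_const_sub_Icc 1 a b
  have hranti : AntitoneOn r (Set.Icc (0:ℝ) 1) := fun a _ b _ hab => by simp [hr]; linarith
  have hgcont : ContinuousOn (f ∘ r) (Set.Icc 0 1) := by
    refine hf.comp (by fun_prop) ?_
    intro z hz; exact ⟨by simp [hr]; linarith [hz.2], by simp [hr]; linarith [hz.1]⟩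
  have hgvar : ∀ a b : ℝ, eVariationOn (f ∘ r) (Set.Icc a b) = eVariationOn f (Set.Icc (1-b) (1-a)) := by
    intro a b
    rcases le_or_gt a b with hab | hab
    · rw [eVariationOn.comp_eq_of_antitoneOn f r (fun x hx y hy hxy => by simp [hr]; linarith),
        hrim]
    · rw [Set.Icc_eq_empty (by linarith : ¬ a ≤ b), Set.Icc_eq_empty (by linarith : ¬ (1-b) ≤ (1-a))]
      simp [eVariationOn.subsingleton]
  have hgfin : eVariationOn (f ∘ r) (Set.Icc 0 1) ≠ ⊤ := by
    rw [show ((0:ℝ)) = 0 by rfl, hgvar 0 1]; simpa using hfin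
  obtain ⟨τ', hτ', hvar⟩ := exists_small_var_right (c := 1 - c)
    ⟨by linarith [hc.2], by linarith [hc.1]⟩ hgcont hgfin hε
  refine ⟨1 - τ', ⟨by linarith [hτ'.2], by linarith [hτ'.1]⟩, ?_⟩
  rw [hgvar] at hvar
  simpa using hvar

lemma psi_diff {E : Type*} [PseudoEMetricSpace E] {f : ℝ → E}
    (hfin : eVariationOn f (Set.Icc 0 1) ≠ ⊤) {a b : ℝ}
    (ha : a ∈ Set.Icc (0:ℝ) 1) (hb : b ∈ Set.Icc (0:ℝ) 1) (hab : a ≤ b) :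
    variationOnFromTo f (Set.Icc 0 1) 0 b - variationOnFromTo f (Set.Icc 0 1) 0 a
      = (eVariationOn f (Set.Icc a b)).toReal := by
  have hbv : LocallyBoundedVariationOn f (Set.Icc 0 1) := fun x y _ _ =>
    ne_top_of_le_ne_top hfin (eVariationOn.mono f Set.inter_subset_left)
  have h0 : (0:ℝ) ∈ Set.Icc (0:ℝ) 1 := ⟨le_refl 0, zero_le_one⟩
  have hadd := variationOnFromTo.add hbv h0 ha hb
  have : variationOnFromTo f (Set.Icc 0 1) a b
      = (eVariationOn f (Set.Icc 0 1 ∩ Set.Icc a b)).toReal :=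
    variationOnFromTo.eq_of_le f (Set.Icc 0 1) hab
  rw [Set.inter_eq_self_of_subset_right (Set.Icc_subset_Icc ha.1 hb.2)] at this
  linarith [hadd, this]

lemma psi_cont {E : Type*} [PseudoEMetricSpace E] {f : ℝ → E}
    (hf : ContinuousOn f (Set.Icc 0 1)) (hfin : eVariationOn f (Set.Icc 0 1) ≠ ⊤) :
    ContinuousOn (variationOnFromTo f (Set.Icc 0 1) 0) (Set.Icc 0 1) := by
  set ψ := variationOnFromTo f (Set.Icc 0 1) 0 with hψ
  intro c hc
  rw [Metric.continuousWithinAt_iff]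
  intro ε hε
  have hR : ∃ δ > 0, ∀ u ∈ Set.Icc (0:ℝ) 1, c ≤ u → u - c < δ → dist (ψ u) (ψ c) < ε := by
    rcases lt_or_ge c 1 with hc1 | hc1
    · obtain ⟨τ, hτ, hvar⟩ := exists_small_var_right ⟨hc.1, hc1⟩ hf hfin (half_pos hε)
      refine ⟨τ - c, by linarith [hτ.1], fun u hu hcu hlt => ?_⟩
      have hdiff := psi_diff hfin hc hu hcu
      have hmono : eVariationOn f (Set.Icc c u) ≤ eVariationOn f (Set.Icc c τ) :=
        eVariationOn.mono f (Set.Icc_subset_Icc_right (by linarith))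
      have hle : (eVariationOn f (Set.Icc c u)).toReal ≤ ε / 2 := by
        calc (eVariationOn f (Set.Icc c u)).toReal
            ≤ (ENNReal.ofReal (ε/2)).toReal :=
              ENNReal.toReal_mono ENNReal.ofReal_ne_top (hmono.trans hvar)
          _ = ε/2 := ENNReal.toReal_ofReal (by linarith)
      rw [Real.dist_eq, abs_of_nonneg (by linarith [hdiff, ENNReal.toReal_nonneg (a := eVariationOn f (Set.Icc c u))])]
      linarith
    · refine ⟨1, one_pos, fun u hu hcu _ => ?_⟩
      have : u = c := le_antisymm (hu.2.trans hc1) hcu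
      rw [this]; simpa using hε
  have hL : ∃ δ > 0, ∀ u ∈ Set.Icc (0:ℝ) 1, u ≤ c → c - u < δ → dist (ψ u) (ψ c) < ε := by
    rcases lt_or_ge 0 c with hc0 | hc0
    · obtain ⟨τ, hτ, hvar⟩ := exists_small_var_left ⟨hc0, hc.2⟩ hf hfin (half_pos hε)
      refine ⟨c - τ, by linarith [hτ.2], fun u hu hcu hlt => ?_⟩
      have hdiff := psi_diff hfin hu hc hcu
      have hmono : eVariationOn f (Set.Icc u c) ≤ eVariationOn f (Set.Icc τ c) :=
        eVariationOn.mono f (Set.Icc_subset_Icc_left (by linarith))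
      have hle : (eVariationOn f (Set.Icc u c)).toReal ≤ ε / 2 := by
        calc (eVariationOn f (Set.Icc u c)).toReal
            ≤ (ENNReal.ofReal (ε/2)).toReal :=
              ENNReal.toReal_mono ENNReal.ofReal_ne_top (hmono.trans hvar)
          _ = ε/2 := ENNReal.toReal_ofReal (by linarith)
      rw [Real.dist_eq, abs_of_nonpos (by linarith [hdiff, ENNReal.toReal_nonneg (a := eVariationOn f (Set.Icc u c))])]
      linarith
    · refine ⟨1, one_pos, fun u hu hcu _ => ?_⟩
      have : u = c := le_antisymm hcu (hc0.trans hu.1)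
      rw [this]; simpa using hε
  obtain ⟨δ₁, hδ₁, h₁⟩ := hR
  obtain ⟨δ₂, hδ₂, h₂⟩ := hL
  refine ⟨min δ₁ δ₂, lt_min hδ₁ hδ₂, fun {u} hu hdist => ?_⟩
  rcases le_total c u with hcu | hcu
  · refine h₁ u hu hcu ?_
    have : |u - c| < δ₁ := lt_of_lt_of_le (by rwa [Real.dist_eq] at hdist) (min_le_left _ _)
    exact lt_of_le_of_lt (le_abs_self _) this
  · refine h₂ u hu hcu ?_
    have : |u - c| < δ₂ := lt_of_lt_of_le (by rwa [Real.dist_eq] at hdist) (min_le_right _ _)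
    exact lt_of_le_of_lt (by rw [abs_sub_comm]; exact le_abs_self _) this

lemma exists_reparam {E : Type*} [EMetricSpace E] {f : ℝ → E}
    (hf : ContinuousOn f (Set.Icc 0 1)) (hfin : eVariationOn f (Set.Icc 0 1) ≠ ⊤) :
    ∃ g : ℝ → E, LipschitzOnWith (eVariationOn f (Set.Icc 0 1)).toNNReal g (Set.Icc 0 1) ∧
      g 0 = f 0 ∧ g 1 = f 1 ∧ (∀ σ ∈ Set.Icc (0:ℝ) 1, ∃ τ ∈ Set.Icc (0:ℝ) 1, g σ = f τ) ∧
      eVariationOn g (Set.Icc 0 1) ≤ eVariationOn f (Set.Icc 0 1) := by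
  have h01 : (0:ℝ) ∈ Set.Icc (0:ℝ) 1 := ⟨le_refl 0, zero_le_one⟩
  have h11 : (1:ℝ) ∈ Set.Icc (0:ℝ) 1 := ⟨zero_le_one, le_refl 1⟩
  have hbv : LocallyBoundedVariationOn f (Set.Icc 0 1) := fun x y _ _ =>
    ne_top_of_le_ne_top hfin (eVariationOn.mono f Set.inter_subset_left)
  set L := eVariationOn f (Set.Icc 0 1) with hL
  set Lr := L.toReal with hLr
  have hLrnn : 0 ≤ Lr := ENNReal.toReal_nonneg
  rcases eq_or_lt_of_le hLrnn with hLr0 | hLrpos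
  · -- zero variation : f is constant on Icc 0 1
    have hL0 : L = 0 := by
      rw [← ENNReal.ofReal_toReal hfin, ← hLr, ← hLr0, ENNReal.ofReal_zero]
    have hconst : ∀ x ∈ Set.Icc (0:ℝ) 1, f x = f 0 := by
      intro x hx
      have := eVariationOn.eq_zero_iff f (s := Set.Icc (0:ℝ) 1) |>.mp hL0 x hx 0 h01
      exact edist_eq_zero.mp this
    refine ⟨fun _ => f 0, ?_, rfl, (hconst 1 h11).symm, fun σ _ => ⟨0, h01, rfl⟩, ?_⟩
    · intro x _ y _; simp
    · rw [eVariationOn.constant_on]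
      · exact zero_le
      · intro a ha b hb
        simp only [Set.mem_image] at ha hb
        obtain ⟨a', _, rfl⟩ := ha; obtain ⟨b', _, rfl⟩ := hb; rfl
  · set ψ := variationOnFromTo f (Set.Icc 0 1) 0 with hψdef
    set np := naturalParameterization f (Set.Icc 0 1) 0 with hnp
    have hψ0 : ψ 0 = 0 := variationOnFromTo.self f _ 0
    have hψ1 : ψ 1 = Lr := by
      have := psi_diff hfin h01 h11 zero_le_one
      rw [← hψdef] at this; rw [← hL] at this; linarith [this, hψ0]
    have himage : ψ '' (Set.Icc 0 1) = Set.Icc 0 Lr := by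
      apply Set.Subset.antisymm
      · rintro _ ⟨τ, hτ, rfl⟩
        have hmono := variationOnFromTo.monotoneOn hbv h01
        constructor
        · rw [← hψ0]; exact hmono h01 hτ hτ.1
        · rw [← hψ1]; exact hmono hτ h11 hτ.2
      · have := intermediate_value_Icc zero_le_one (psi_cont hf hfin)
        rw [← hψdef, hψ0, hψ1] at this
        exact this
    have hup : HasUnitSpeedOn np (Set.Icc 0 Lr) := by
      have := has_unit_speed_naturalParameterization f hbv h01
      rw [← hψdef, ← hnp, himage] at this
      exact this
    have hnp_lip : LipschitzOnWith 1 np (Set.Icc 0 Lr) := by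
      intro a ha b hb
      rcases le_total a b with hab | hab
      · have h1 : edist (np b) (np a) ≤ eVariationOn np (Set.Icc 0 Lr ∩ Set.Icc a b) :=
          eVariationOn.edist_le np ⟨hb, hab, le_refl b⟩ ⟨ha, le_refl a, hab⟩
        rw [hup ha hb] at h1
        rw [edist_comm] at h1
        calc edist (np a) (np b) ≤ ENNReal.ofReal (1 * (b - a)) := h1
          _ = ENNReal.ofReal (b - a) := by rw [one_mul]
          _ ≤ 1 * edist a b := by
              rw [one_mul, edist_dist, Real.dist_eq]
              exact ENNReal.ofReal_le_ofReal (by rw [abs_sub_comm]; exact le_abs_self _)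
      · have h1 : edist (np a) (np b) ≤ eVariationOn np (Set.Icc 0 Lr ∩ Set.Icc b a) :=
          eVariationOn.edist_le np ⟨ha, hab, le_refl a⟩ ⟨hb, le_refl b, hab⟩
        rw [hup hb ha] at h1
        calc edist (np a) (np b) ≤ ENNReal.ofReal (1 * (a - b)) := h1
          _ = ENNReal.ofReal (a - b) := by rw [one_mul]
          _ ≤ 1 * edist a b := by
              rw [one_mul, edist_dist, Real.dist_eq]
              exact ENNReal.ofReal_le_ofReal (le_abs_self _)
    -- define g
    set g : ℝ → E := fun σ => np (Lr * σ) with hg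
    have hmapsmul : Set.MapsTo (fun σ : ℝ => Lr * σ) (Set.Icc 0 1) (Set.Icc 0 Lr) := by
      intro σ hσ
      simp only [Set.mem_Icc]
      exact ⟨mul_nonneg hLrnn hσ.1, mul_le_of_le_one_right hLrnn hσ.2⟩
    have hCoe : (L.toNNReal : ENNReal) = L := ENNReal.coe_toNNReal hfin
    have hnpψ : ∀ τ ∈ Set.Icc (0:ℝ) 1, np (ψ τ) = f τ := by
      intro τ hτ
      exact edist_eq_zero.mp (edist_naturalParameterization_eq_zero hbv h01 hτ)
    have hglip : LipschitzOnWith L.toNNReal g (Set.Icc 0 1) := by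
      intro a ha b hb
      have h1 : edist (g a) (g b) ≤ 1 * edist (Lr * a) (Lr * b) :=
        hnp_lip (hmapsmul ha) (hmapsmul hb)
      rw [one_mul] at h1
      refine h1.trans ?_
      rw [hCoe, edist_dist, edist_dist, Real.dist_eq, Real.dist_eq, ← mul_sub, abs_mul,
        abs_of_nonneg hLrnn, ENNReal.ofReal_mul hLrnn]
      exact mul_le_mul_left (le_of_eq (by rw [hLr, ENNReal.ofReal_toReal hfin])) _
    have hg0 : g 0 = f 0 := by
      have : Lr * 0 = ψ 0 := by rw [hψ0, mul_zero]
      rw [hg]; simp only []; rw [this]; exact hnpψ 0 h01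
    have hg1 : g 1 = f 1 := by
      have : Lr * 1 = ψ 1 := by rw [hψ1, mul_one]
      rw [hg]; simp only []; rw [this]; exact hnpψ 1 h11
    have him : ∀ σ ∈ Set.Icc (0:ℝ) 1, ∃ τ ∈ Set.Icc (0:ℝ) 1, g σ = f τ := by
      intro σ hσ
      have : Lr * σ ∈ ψ '' (Set.Icc 0 1) := by rw [himage]; exact hmapsmul hσ
      obtain ⟨τ, hτ, hψτ⟩ := this
      exact ⟨τ, hτ, by rw [hg]; simp only []; rw [← hψτ]; exact hnpψ τ hτ⟩
    have hvar : eVariationOn g (Set.Icc 0 1) ≤ L := by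
      have hcomp : eVariationOn (np ∘ (fun σ : ℝ => Lr * σ)) (Set.Icc 0 1)
          ≤ 1 * eVariationOn (fun σ : ℝ => Lr * σ) (Set.Icc 0 1) :=
        hnp_lip.comp_eVariationOn_le hmapsmul
      have hmulmono : MonotoneOn (fun σ : ℝ => Lr * σ) (Set.Icc 0 1) := by
        intro a _ b _ hab
        exact mul_le_mul_of_nonneg_left hab hLrnn
      have hmulvar : eVariationOn (fun σ : ℝ => Lr * σ) (Set.Icc 0 1) ≤
          ENNReal.ofReal (Lr * 1 - Lr * 0) := by
        have := hmulmono.eVariationOn_le h01 h11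
        rwa [Set.inter_self] at this
      calc eVariationOn g (Set.Icc 0 1)
          = eVariationOn (np ∘ (fun σ : ℝ => Lr * σ)) (Set.Icc 0 1) := rfl
        _ ≤ 1 * eVariationOn (fun σ : ℝ => Lr * σ) (Set.Icc 0 1) := hcomp
        _ = eVariationOn (fun σ : ℝ => Lr * σ) (Set.Icc 0 1) := one_mul _
        _ ≤ ENNReal.ofReal (Lr * 1 - Lr * 0) := hmulvar
        _ = ENNReal.ofReal Lr := by norm_num
        _ = L := by rw [hLr, ENNReal.ofReal_toReal hfin]
    exact ⟨g, hglip, hg0, hg1, him, hvar⟩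

section Aux
variable {E : Type*} [NormedAddCommGroup E] [NormedSpace ℝ E]

lemma norm_eq_one_of_mem_dirSeqAt {X : Set E} {p : E} {t : ℕ → ℝ}
    (ht : ∀ j, 0 < t j) {v : E} (hv : v ∈ dirSeqAt X p t) : ‖v‖ = 1 := by
  obtain ⟨x, j₀, hmem, hnorm, htend⟩ := hv
  have h1 : Tendsto (fun j => ‖(t j)⁻¹ • (x j - p)‖) atTop (nhds ‖v‖) := htend.norm
  have h2 : ∀ᶠ j in atTop, ‖(t j)⁻¹ • (x j - p)‖ = 1 := by
    filter_upwards [eventually_ge_atTop j₀] with j hj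
    rw [norm_smul, Real.norm_eq_abs, abs_of_pos (inv_pos.mpr (ht j)), hnorm j hj,
      inv_mul_cancel₀ (ht j).ne']
  exact tendsto_nhds_unique h1 (Tendsto.congr' (by filter_upwards [h2] with j hj using hj.symm)
    tendsto_const_nhds)

lemma zero_mem_coneOver {D : Set E} {v : E} (hv : v ∈ D) : (0:E) ∈ coneOver D :=
  ⟨0, le_refl 0, v, hv, (zero_smul ℝ v).symm⟩

lemma smul_mem_coneOver {D : Set E} {z : E} (hz : z ∈ coneOver D) {s : ℝ} (hs : 0 ≤ s) :
    s • z ∈ coneOver D := by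
  obtain ⟨r, hr, v, hv, rfl⟩ := hz
  exact ⟨s * r, mul_nonneg hs hr, v, hv, smul_smul s r v⟩

lemma innerDist_le_of_path {X : Set E} {x y : E} {γ : ℝ → E} (h : IsPathIn X x y γ) :
    innerDist X x y ≤ pathLength γ := by
  rw [innerDist]
  exact iInf₂_le γ h

lemma exists_path_of_innerDist_lt {X : Set E} {x y : E} {c : ENNReal}
    (h : innerDist X x y < c) : ∃ γ, IsPathIn X x y γ ∧ pathLength γ < c := by
  by_contra hcon
  push_neg at hcon
  have : c ≤ innerDist X x y := le_iInf₂ (fun γ hγ => hcon γ hγ)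
  exact absurd h (not_lt.mpr this)

lemma eVar_rescale {c : ℝ} (hc : 0 ≤ c) (x₀ : E) (γ : ℝ → E) (s : Set ℝ) :
    eVariationOn (fun τ => c • (γ τ - x₀)) s ≤ ENNReal.ofReal c * eVariationOn γ s := by
  have hlip : LipschitzWith c.toNNReal (fun p : E => c • (p - x₀)) := by
    apply LipschitzWith.of_dist_le_mul
    intro p q
    rw [dist_eq_norm]
    have : c • (p - x₀) - c • (q - x₀) = c • (p - q) := by
      rw [← smul_sub]; congr 1; abel
    rw [this, norm_smul, Real.norm_eq_abs, abs_of_nonneg hc, Real.coe_toNNReal _ hc,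
      ← dist_eq_norm]
  have := (hlip.lipschitzOnWith (s := Set.univ)).comp_eVariationOn_le (Set.mapsTo_univ γ s)
  exact this
end Aux

section Aux2
variable {E : Type*} [NormedAddCommGroup E] [NormedSpace ℝ E]

lemma mem_T_of_seq {X : Set E} {x₀ : E} {T : Set E}
    (hT : ∀ t : ℕ → ℝ, (∀ j, 0 < t j) → Filter.Tendsto t Filter.atTop (nhds 0) →
      coneOver (dirSeqAt X x₀ t) = T)
    {z : E} (hz : z ≠ 0) {w : ℕ → E} {ts : ℕ → ℝ} (hts : ∀ k, 0 < ts k)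
    (hts0 : Tendsto ts atTop (nhds 0)) (hwX : ∀ k, x₀ + ts k • w k ∈ X)
    (hwz : Tendsto w atTop (nhds z)) : z ∈ T := by
  have hznorm : 0 < ‖z‖ := norm_pos_iff.mpr hz
  have hev : ∀ᶠ k in atTop, 0 < ‖w k‖ := hwz.norm.eventually (eventually_gt_nhds hznorm)
  obtain ⟨K, hK⟩ := eventually_atTop.mp hev
  set M : ℕ → ℕ := fun k => max k K with hM
  have hMtend : Tendsto M atTop atTop := tendsto_atTop_mono (fun k => le_max_left k K) tendsto_id
  set t'' : ℕ → ℝ := fun k => ts (M k) * ‖w (M k)‖ with ht''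
  have ht''pos : ∀ k, 0 < t'' k := fun k => mul_pos (hts _) (hK _ (le_max_right _ _))
  have ht''0 : Tendsto t'' atTop (nhds 0) := by
    have := (hts0.comp hMtend).mul (hwz.norm.comp hMtend)
    rwa [zero_mul] at this
  set x'' : ℕ → E := fun k => x₀ + ts (M k) • w (M k) with hx''
  have hsub : ∀ k, x'' k - x₀ = ts (M k) • w (M k) := fun k => add_sub_cancel_left x₀ _
  have hnorm : ∀ k, ‖x'' k - x₀‖ = t'' k := by
    intro k
    rw [hsub k, norm_smul, Real.norm_eq_abs, abs_of_pos (hts _)]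
  have hmem : ∀ k, x'' k ∈ X \ {x₀} := by
    intro k
    refine ⟨hwX _, ?_⟩
    intro hk
    simp only [Set.mem_singleton_iff] at hk
    have := hnorm k
    rw [hk, sub_self, norm_zero] at this
    exact absurd this.symm (ht''pos k).ne'
  have hdir : Tendsto (fun k => (t'' k)⁻¹ • (x'' k - x₀)) atTop (nhds (‖z‖⁻¹ • z)) := by
    have heq : (fun k => (t'' k)⁻¹ • (x'' k - x₀)) = fun k => ‖w (M k)‖⁻¹ • w (M k) := by
      funext k
      rw [hsub k, smul_smul, ht'']
      congr 1
      rw [mul_inv]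
      field_simp [(hts (M k)).ne', (hK (M k) (le_max_right _ _)).ne']
    rw [heq]
    have hcont : ContinuousAt (fun u : E => ‖u‖⁻¹ • u) z :=
      (continuous_norm.continuousAt.inv₀ hznorm.ne').smul continuousAt_id
    exact hcont.tendsto.comp (hwz.comp hMtend)
  have hv : ‖z‖⁻¹ • z ∈ dirSeqAt X x₀ t'' := ⟨x'', 0, hmem, fun j _ => hnorm j, hdir⟩
  rw [← hT t'' ht''pos ht''0]
  exact ⟨‖z‖, norm_nonneg z, ‖z‖⁻¹ • z, hv, (smul_inv_smul₀ hznorm.ne' z).symm⟩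

lemma unitdir_mem_dirSeqAt {X : Set E} {x₀ : E} {T : Set E}
    (hT : ∀ t : ℕ → ℝ, (∀ j, 0 < t j) → Filter.Tendsto t Filter.atTop (nhds 0) →
      coneOver (dirSeqAt X x₀ t) = T)
    {x : E} (hx : x ∈ T) (hxne : x ≠ 0) {t : ℕ → ℝ} (ht : ∀ j, 0 < t j)
    (ht0 : Tendsto t atTop (nhds 0)) : ‖x‖⁻¹ • x ∈ dirSeqAt X x₀ t := by
  rw [← hT t ht ht0] at hx
  obtain ⟨s, hs, v, hv, rfl⟩ := hx
  have hv1 : ‖v‖ = 1 := norm_eq_one_of_mem_dirSeqAt ht hv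
  have hsne : s ≠ 0 := by
    rintro rfl
    rw [zero_smul] at hxne
    exact hxne rfl
  have hnorm : ‖s • v‖ = s := by rw [norm_smul, Real.norm_eq_abs, hv1, mul_one, abs_of_nonneg hs]
  rw [hnorm, smul_smul, inv_mul_cancel₀ hsne, one_smul]
  exact hv
end Aux2


lemma lipschitzOnWith_eVar_le {E' : Type*} [PseudoEMetricSpace E'] {F : ℝ → E'} {C : ℝ≥0}
    (h : LipschitzOnWith C F (Set.Icc 0 1)) :
    eVariationOn F (Set.Icc 0 1) ≤ (C : ENNReal) := by
  have hm : Set.MapsTo (id : ℝ → ℝ) (Set.Icc 0 1) (Set.Icc 0 1) := fun z hz => hz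
  have h1 : eVariationOn (F ∘ id) (Set.Icc 0 1) ≤ C * eVariationOn (id : ℝ → ℝ) (Set.Icc 0 1) :=
    h.comp_eVariationOn_le hm
  have h2 : eVariationOn (id : ℝ → ℝ) (Set.Icc 0 1) ≤ ENNReal.ofReal ((1:ℝ) - 0) := by
    have hmono : MonotoneOn (id : ℝ → ℝ) (Set.Icc 0 1) := fun a _ b _ hab => hab
    have := hmono.eVariationOn_le ⟨le_refl (0:ℝ), zero_le_one⟩ ⟨zero_le_one, le_refl (1:ℝ)⟩
    rwa [Set.inter_self] at this
  calc eVariationOn F (Set.Icc 0 1) = eVariationOn (F ∘ id) (Set.Icc 0 1) := rfl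
    _ ≤ C * eVariationOn (id : ℝ → ℝ) (Set.Icc 0 1) := h1
    _ ≤ C * ENNReal.ofReal ((1:ℝ) - 0) := mul_le_mul_right h2 _
    _ = C := by norm_num


/-- if `X ∋ x₀` has a unique tangent cone `T` at `x₀` and `X` is Lipschitz
normally embedded with constant `lam`, then `T` is Lipschitz normally embedded with
constant at most `1 + lam`. -/
theorem stmt6 {m : ℕ} (X : Set (EuclideanSpace ℝ (Fin m)))
    (x₀ : EuclideanSpace ℝ (Fin m)) (h0 : x₀ ∈ X)
    (T : Set (EuclideanSpace ℝ (Fin m)))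
    (hT : ∀ t : ℕ → ℝ, (∀ j, 0 < t j) → Filter.Tendsto t Filter.atTop (nhds 0) →
      coneOver (dirSeqAt X x₀ t) = T)
    (lam : ℝ) (hlam : 1 ≤ lam)
    (hne : ∀ x ∈ X, ∀ y ∈ X, innerDist X x y ≤ ENNReal.ofReal (lam * ‖x - y‖)) :
    ∀ x ∈ T, ∀ y ∈ T, innerDist T x y ≤ ENNReal.ofReal ((1 + lam) * ‖x - y‖) := by
  classical
  have h01 : (0:ℝ) ∈ Set.Icc (0:ℝ) 1 := ⟨le_refl 0, zero_le_one⟩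
  have h11 : (1:ℝ) ∈ Set.Icc (0:ℝ) 1 := ⟨zero_le_one, le_refl 1⟩
  set t₀ : ℕ → ℝ := fun j => 1/((j:ℝ)+1) with ht₀def
  have ht₀pos : ∀ j, 0 < t₀ j := fun j => by positivity
  have ht₀lim : Tendsto t₀ atTop (nhds 0) := tendsto_one_div_add_atTop_nhds_zero_nat
  intro x hx y hy
  have hconeT : ∀ z ∈ T, ∀ s : ℝ, 0 ≤ s → s • z ∈ T := by
    intro z hz s hs
    rw [← hT t₀ ht₀pos ht₀lim] at hz ⊢
    exact smul_mem_coneOver hz hs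
  rcases eq_or_ne x 0 with rfl | hx0
  · -- x = 0 : radial path to y
    have hpath : IsPathIn T 0 y (fun σ : ℝ => σ • y) := by
      refine ⟨(continuous_id.smul continuous_const).continuousOn, ?_, ?_, ?_⟩
      · intro σ hσ; exact hconeT y hy σ hσ.1
      · show (0:ℝ) • y = 0; rw [zero_smul]
      · show (1:ℝ) • y = y; rw [one_smul]
    refine (innerDist_le_of_path hpath).trans ?_
    have hlip : LipschitzOnWith ‖y‖₊ (fun σ : ℝ => σ • y) (Set.Icc 0 1) := by
      refine (LipschitzWith.of_dist_le_mul ?_).lipschitzOnWith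
      intro p q
      rw [dist_eq_norm, ← sub_smul, norm_smul, Real.norm_eq_abs, dist_eq_norm, Real.norm_eq_abs,
        coe_nnnorm, mul_comm]
    refine (lipschitzOnWith_eVar_le hlip).trans ?_
    rw [← ENNReal.ofReal_coe_nnreal, coe_nnnorm]
    apply ENNReal.ofReal_le_ofReal
    rw [zero_sub, norm_neg]
    nlinarith [norm_nonneg y]
  rcases eq_or_ne y 0 with rfl | hy0
  · -- y = 0 : radial path from x
    have hpath : IsPathIn T x 0 (fun σ : ℝ => (1 - σ) • x) := by
      refine ⟨((continuous_const.sub continuous_id).smul continuous_const).continuousOn, ?_, ?_, ?_⟩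
      · intro σ hσ; exact hconeT x hx (1 - σ) (by linarith [hσ.2])
      · show ((1:ℝ) - 0) • x = x; rw [sub_zero, one_smul]
      · show ((1:ℝ) - 1) • x = 0; rw [sub_self, zero_smul]
    refine (innerDist_le_of_path hpath).trans ?_
    have hlip : LipschitzOnWith ‖x‖₊ (fun σ : ℝ => (1 - σ) • x) (Set.Icc 0 1) := by
      refine (LipschitzWith.of_dist_le_mul ?_).lipschitzOnWith
      intro p q
      rw [dist_eq_norm, ← sub_smul, norm_smul, Real.norm_eq_abs, dist_eq_norm, Real.norm_eq_abs,
        coe_nnnorm, mul_comm]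
      have : (1:ℝ) - p - (1 - q) = -(p - q) := by ring
      rw [this, abs_neg]
    refine (lipschitzOnWith_eVar_le hlip).trans ?_
    rw [← ENNReal.ofReal_coe_nnreal, coe_nnnorm]
    apply ENNReal.ofReal_le_ofReal
    rw [sub_zero]
    nlinarith [norm_nonneg x]
  · -- main case : x ≠ 0, y ≠ 0
    have hlam0 : (0:ℝ) ≤ lam := by linarith
    have hxnorm : 0 < ‖x‖ := norm_pos_iff.mpr hx0
    have hynorm : 0 < ‖y‖ := norm_pos_iff.mpr hy0
    obtain ⟨a, ja, haX, hanorm, hatend⟩ :=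
      unitdir_mem_dirSeqAt hT hx hx0 (t := fun j => ‖x‖ * t₀ j)
        (fun j => mul_pos hxnorm (ht₀pos j))
        (by have := ht₀lim.const_mul ‖x‖; rwa [mul_zero] at this)
    obtain ⟨b, jb, hbX, hbnorm, hbtend⟩ :=
      unitdir_mem_dirSeqAt hT hy hy0 (t := fun j => ‖y‖ * t₀ j)
        (fun j => mul_pos hynorm (ht₀pos j))
        (by have := ht₀lim.const_mul ‖y‖; rwa [mul_zero] at this)
    set ta : ℕ → EuclideanSpace ℝ (Fin m) := fun j => (t₀ j)⁻¹ • (a j - x₀) with htadef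
    set tb : ℕ → EuclideanSpace ℝ (Fin m) := fun j => (t₀ j)⁻¹ • (b j - x₀) with htbdef
    have hta_tend : Tendsto ta atTop (nhds x) := by
      have heq : ta = fun j => ‖x‖ • ((‖x‖ * t₀ j)⁻¹ • (a j - x₀)) := by
        funext j
        rw [htadef]
        simp only
        rw [smul_smul, mul_inv, ← mul_assoc, mul_inv_cancel₀ hxnorm.ne', one_mul]
      rw [heq]
      have := hatend.const_smul ‖x‖
      rwa [smul_inv_smul₀ hxnorm.ne'] at this
    have htb_tend : Tendsto tb atTop (nhds y) := by
      have heq : tb = fun j => ‖y‖ • ((‖y‖ * t₀ j)⁻¹ • (b j - x₀)) := by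
        funext j
        rw [htbdef]
        simp only
        rw [smul_smul, mul_inv, ← mul_assoc, mul_inv_cancel₀ hynorm.ne', one_mul]
      rw [heq]
      have := hbtend.const_smul ‖y‖
      rwa [smul_inv_smul₀ hynorm.ne'] at this
    -- choose quasi-geodesics in X
    have hpaths : ∀ j : ℕ, ∃ γ, IsPathIn X (a j) (b j) γ ∧
        pathLength γ < ENNReal.ofReal (lam * ‖a j - b j‖) + ENNReal.ofReal (t₀ j * t₀ j) := by
      intro j
      apply exists_path_of_innerDist_lt
      refine lt_of_le_of_lt (hne (a j) (haX j).1 (b j) (hbX j).1) ?_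
      refine ENNReal.lt_add_right ENNReal.ofReal_ne_top ?_
      rw [ne_eq, ENNReal.ofReal_eq_zero, not_le]
      positivity
    choose γ hγ hγlen using hpaths
    set γ' : ℕ → ℝ → EuclideanSpace ℝ (Fin m) := fun j τ => (t₀ j)⁻¹ • (γ j τ - x₀) with hγ'def
    have hγ'cont : ∀ j, ContinuousOn (γ' j) (Set.Icc 0 1) := fun j =>
      by have := ((hγ j).1.sub (continuousOn_const (c := x₀))).const_smul (t₀ j)⁻¹; exact this
    have hnorm_tab : ∀ j, ‖ta j - tb j‖ = (t₀ j)⁻¹ * ‖a j - b j‖ := by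
      intro j
      rw [htadef, htbdef]
      simp only
      rw [← smul_sub, sub_sub_sub_cancel_right, norm_smul, Real.norm_eq_abs,
        abs_of_pos (inv_pos.mpr (ht₀pos j))]
    set B : ℕ → ENNReal := fun j => ENNReal.ofReal (lam * ‖ta j - tb j‖ + t₀ j) with hBdef
    have hγ'var : ∀ j, eVariationOn (γ' j) (Set.Icc 0 1) ≤ B j := by
      intro j
      refine (eVar_rescale (inv_pos.mpr (ht₀pos j)).le x₀ (γ j) _).trans ?_
      have h2 : eVariationOn (γ j) (Set.Icc 0 1) ≤
          ENNReal.ofReal (lam * ‖a j - b j‖) + ENNReal.ofReal (t₀ j * t₀ j) := (hγlen j).le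
      calc ENNReal.ofReal (t₀ j)⁻¹ * eVariationOn (γ j) (Set.Icc 0 1)
          ≤ ENNReal.ofReal (t₀ j)⁻¹ *
            (ENNReal.ofReal (lam * ‖a j - b j‖) + ENNReal.ofReal (t₀ j * t₀ j)) :=
            mul_le_mul_right h2 _
        _ = B j := by
            rw [mul_add, ← ENNReal.ofReal_mul (by positivity), ← ENNReal.ofReal_mul (by positivity),
              ← ENNReal.ofReal_add (mul_nonneg (by positivity)
                (mul_nonneg hlam0 (norm_nonneg _))) (by positivity), hBdef]
            simp only
            congr 1
            rw [hnorm_tab j]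
            field_simp
    have hBreal : Tendsto (fun j => lam * ‖ta j - tb j‖ + t₀ j) atTop
        (nhds (lam * ‖x - y‖)) := by
      have h1 : Tendsto (fun j => lam * ‖ta j - tb j‖ + t₀ j) atTop
          (nhds (lam * ‖x - y‖ + 0)) :=
        (((hta_tend.sub htb_tend).norm).const_mul lam).add ht₀lim
      rwa [add_zero] at h1
    have hBlim : Tendsto B atTop (nhds (ENNReal.ofReal (lam * ‖x - y‖))) :=
      (ENNReal.continuous_ofReal.tendsto _).comp hBreal
    have hγ'fin : ∀ j, eVariationOn (γ' j) (Set.Icc 0 1) ≠ ⊤ := fun j =>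
      ne_top_of_le_ne_top ENNReal.ofReal_ne_top (hγ'var j)
    choose g hglip hg0 hg1 him hgvar using fun j => exists_reparam (hγ'cont j) (hγ'fin j)
    have hgvarB : ∀ j, eVariationOn (g j) (Set.Icc 0 1) ≤ B j := fun j =>
      (hgvar j).trans (hγ'var j)
    have hga : ∀ j, g j 0 = ta j := by
      intro j
      rw [hg0 j, hγ'def]
      simp only
      rw [(hγ j).2.2.1]
    have hgb : ∀ j, g j 1 = tb j := by
      intro j
      rw [hg1 j, hγ'def]
      simp only
      rw [(hγ j).2.2.2]
    set Ci : ℝ := lam * ‖x - y‖ + 1 with hCidef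
    have hCinn : 0 ≤ Ci := by nlinarith [norm_nonneg (x - y)]
    have hBc : ∀ᶠ j in atTop, lam * ‖ta j - tb j‖ + t₀ j ≤ Ci :=
      hBreal.eventually (eventually_le_nhds (by nlinarith [norm_nonneg (x - y)]))
    have hgdist : ∀ σ ∈ Set.Icc (0:ℝ) 1, ∀ σ' ∈ Set.Icc (0:ℝ) 1,
        ∀ᶠ j in atTop, dist (g j σ) (g j σ') ≤ Ci * |σ - σ'| := by
      intro σ hσ σ' hσ'
      filter_upwards [hBc] with j hj
      have h1 := (hglip j).dist_le_mul σ hσ σ' hσ'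
      refine h1.trans ?_
      rw [Real.dist_eq]
      apply mul_le_mul_of_nonneg_right ?_ (abs_nonneg _)
      calc ((eVariationOn (γ' j) (Set.Icc 0 1)).toNNReal : ℝ)
          = (eVariationOn (γ' j) (Set.Icc 0 1)).toReal := rfl
        _ ≤ (B j).toReal := ENNReal.toReal_mono ENNReal.ofReal_ne_top (hγ'var j)
        _ = lam * ‖ta j - tb j‖ + t₀ j := ENNReal.toReal_ofReal
            (add_nonneg (mul_nonneg hlam0 (norm_nonneg _)) (ht₀pos j).le)
        _ ≤ Ci := hj
    set u : Ultrafilter ℕ := Ultrafilter.of atTop with hudef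
    have hule : (u : Filter ℕ) ≤ atTop := Ultrafilter.of_le _
    set R : ℝ := ‖x‖ + 1 + Ci with hRdef
    have hball : ∀ σ ∈ Set.Icc (0:ℝ) 1, ∀ᶠ j in atTop,
        g j σ ∈ Metric.closedBall (0 : EuclideanSpace ℝ (Fin m)) R := by
      intro σ hσ
      filter_upwards [hgdist σ hσ 0 h01,
        hta_tend.norm.eventually (eventually_le_nhds (by linarith : ‖x‖ < ‖x‖ + 1))] with j h1 h2
      rw [Metric.mem_closedBall, dist_zero_right]
      have h3 : ‖g j σ‖ ≤ dist (g j σ) (g j 0) + ‖g j 0‖ := by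
        calc ‖g j σ‖ = ‖(g j σ - g j 0) + g j 0‖ := by rw [sub_add_cancel]
          _ ≤ ‖g j σ - g j 0‖ + ‖g j 0‖ := norm_add_le _ _
          _ = dist (g j σ) (g j 0) + ‖g j 0‖ := by rw [dist_eq_norm]
      have h4 : |σ - 0| ≤ 1 := by
        rw [sub_zero, abs_of_nonneg hσ.1]; exact hσ.2
      have h5 : Ci * |σ - 0| ≤ Ci := by
        calc Ci * |σ - 0| ≤ Ci * 1 := mul_le_mul_of_nonneg_left h4 hCinn
          _ = Ci := mul_one Ci
      have h6 : ‖g j 0‖ = ‖ta j‖ := by rw [hga j]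
      rw [hRdef]
      calc ‖g j σ‖ ≤ dist (g j σ) (g j 0) + ‖g j 0‖ := h3
        _ ≤ Ci * |σ - 0| + ‖ta j‖ := by rw [h6]; exact add_le_add_left h1 _
        _ ≤ Ci + (‖x‖ + 1) := add_le_add h5 h2
        _ = ‖x‖ + 1 + Ci := by ring
    have hconv : ∀ σ : ℝ, ∃ z, σ ∈ Set.Icc (0:ℝ) 1 →
        Tendsto (fun j => g j σ) (u : Filter ℕ) (nhds z) := by
      intro σ
      by_cases hσ : σ ∈ Set.Icc (0:ℝ) 1
      · have hmem : Metric.closedBall (0 : EuclideanSpace ℝ (Fin m)) R ∈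
            Ultrafilter.map (fun j => g j σ) u := by
          rw [Ultrafilter.mem_map]
          exact hule (hball σ hσ)
        obtain ⟨z, _, hz⟩ := (isCompact_closedBall
          (0 : EuclideanSpace ℝ (Fin m)) R).ultrafilter_le_nhds _ (le_principal_iff.mpr hmem)
        exact ⟨z, fun _ => by rwa [Ultrafilter.coe_map] at hz⟩
      · exact ⟨x, fun h => absurd h hσ⟩
    choose F hF using hconv
    have hF0 : F 0 = x := by
      have h1 : Tendsto (fun j => g j 0) atTop (nhds x) := by
        have heq : (fun j => g j 0) = ta := funext hga
        rw [heq]; exact hta_tend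
      exact tendsto_nhds_unique (hF 0 h01) (h1.mono_left hule)
    have hF1 : F 1 = y := by
      have h1 : Tendsto (fun j => g j 1) atTop (nhds y) := by
        have heq : (fun j => g j 1) = tb := funext hgb
        rw [heq]; exact htb_tend
      exact tendsto_nhds_unique (hF 1 h11) (h1.mono_left hule)
    have hFdist : ∀ σ ∈ Set.Icc (0:ℝ) 1, ∀ σ' ∈ Set.Icc (0:ℝ) 1,
        dist (F σ) (F σ') ≤ Ci * |σ - σ'| := by
      intro σ hσ σ' hσ'
      have h1 : Tendsto (fun j => dist (g j σ) (g j σ')) (u : Filter ℕ)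
          (nhds (dist (F σ) (F σ'))) := (hF σ hσ).dist (hF σ' hσ')
      exact le_of_tendsto h1 (hule (hgdist σ hσ σ' hσ'))
    have hFlip : LipschitzOnWith (Real.toNNReal Ci) F (Set.Icc 0 1) := by
      apply LipschitzOnWith.of_dist_le_mul
      intro σ hσ σ' hσ'
      rw [Real.coe_toNNReal _ hCinn, Real.dist_eq]
      exact hFdist σ hσ σ' hσ'
    have hFcont : ContinuousOn F (Set.Icc 0 1) := hFlip.continuousOn
    have h0T : (0 : EuclideanSpace ℝ (Fin m)) ∈ T := by
      have := hconeT x hx 0 le_rfl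
      rwa [zero_smul] at this
    have hFmaps : Set.MapsTo F (Set.Icc 0 1) T := by
      intro σ hσ
      rcases eq_or_ne (F σ) 0 with hz | hz
      · rw [hz]; exact h0T
      · have hnb : (Filter.map (fun j => g j σ) (u : Filter ℕ)).NeBot := Filter.map_neBot
        have hclust : MapClusterPt (F σ) atTop (fun j => g j σ) :=
          hnb.mono (le_inf (hF σ hσ) (Filter.map_mono hule))
        obtain ⟨φ, hφ, hφt⟩ := TopologicalSpace.FirstCountableTopology.tendsto_subseq hclust
        refine mem_T_of_seq hT hz (ts := fun k => t₀ (φ k)) (w := (fun j => g j σ) ∘ φ)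
          (fun k => ht₀pos _) (ht₀lim.comp hφ.tendsto_atTop) ?_ hφt
        intro k
        obtain ⟨τ, hτ, hgτ⟩ := him (φ k) σ hσ
        show x₀ + t₀ (φ k) • g (φ k) σ ∈ X
        rw [hgτ, hγ'def]
        simp only
        rw [smul_inv_smul₀ (ht₀pos (φ k)).ne', add_comm, sub_add_cancel]
        exact (hγ (φ k)).2.1 hτ
    have hFvar : eVariationOn F (Set.Icc 0 1) ≤ ENNReal.ofReal (lam * ‖x - y‖) := by
      by_contra hcon
      push_neg at hcon
      obtain ⟨v, hv1, hv2⟩ := exists_between hcon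
      have hev := eVariationOn.lowerSemicontinuous_aux (F := fun j => g j)
        (p := (u : Filter ℕ)) (f := F) (s := Set.Icc 0 1) (fun σ hσ => hF σ hσ) hv2
      have hfreq : ∃ᶠ j in atTop, v ≤ B j :=
        ((hev.mono fun j hj => (hj.trans_le (hgvarB j)).le).frequently).filter_mono hule
      have hle : v ≤ ENNReal.ofReal (lam * ‖x - y‖) := by
        have h1 := Filter.le_limsup_of_frequently_le hfreq (by isBoundedDefault)
        rwa [hBlim.limsup_eq] at h1
      exact absurd hv1 (not_lt.mpr hle)
    have hpathF : IsPathIn T x y F := ⟨hFcont, hFmaps, hF0, hF1⟩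
    refine (innerDist_le_of_path hpathF).trans (hFvar.trans (ENNReal.ofReal_le_ofReal ?_))
    nlinarith [norm_nonneg (x - y)]
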